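/- The plane projective curve defined by f(z₁,z₂,z₃) = z₃(z₁z₃³ + z₂⁴)² + z₁⁹ has, at the point [0:0:1] (i.e., z₁ = z₂ = 0 in the affine chart z₃ = 1), a singularity whose local equation g(z₁,z₂) = (z₁ + z₂⁴)² + z₁⁹ is, after an analytic change of coordinates, equivalent to w² − z³⁶ = 0. -/

import Mathlib

open MvPowerSeries Finsupp

noncomputable section
abbrev R2 : Type := MvPowerSeries (Fin 2) ℂ

def sdeg (d : Fin 2 →₀ ℕ) : ℕ := d 0 + d 1

lemma sdeg_add (a b : Fin 2 →₀ ℕ) : sdeg (a + b) = sdeg a + sdeg b := by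
  simp [sdeg]; ring

lemma sdeg_eq_zero {d : Fin 2 →₀ ℕ} (h : sdeg d = 0) : d = 0 := by
  simp only [sdeg] at h
  ext i
  fin_cases i <;> simp <;> omega

def fe (a b : ℕ) : Fin 2 →₀ ℕ := single 0 a + single 1 b

lemma fe_apply0 (a b : ℕ) : fe a b 0 = a := by simp [fe]

lemma fe_apply1 (a b : ℕ) : fe a b 1 = b := by simp [fe, Finsupp.single_apply]

lemma fe_eq (e : Fin 2 →₀ ℕ) : fe (e 0) (e 1) = e := by
  ext i; fin_cases i
  · simpa using fe_apply0 (e 0) (e 1)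
  · simpa using fe_apply1 (e 0) (e 1)

lemma sdeg_mono {d e : Fin 2 →₀ ℕ} (h : d ≤ e) : sdeg d ≤ sdeg e := by
  have h0 := Finsupp.le_def.mp h 0
  have h1 := Finsupp.le_def.mp h 1
  simp only [sdeg]; omega

lemma le_fe_iff {e : Fin 2 →₀ ℕ} {a b : ℕ} : e ≤ fe a b ↔ e 0 ≤ a ∧ e 1 ≤ b := by
  rw [Finsupp.le_def]
  constructor
  · intro h; exact ⟨by simpa [fe_apply0] using h 0, by simpa [fe_apply1] using h 1⟩
  · rintro ⟨h0, h1⟩ i; fin_cases i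
    · simpa [fe_apply0] using h0
    · simpa [fe_apply1] using h1

def ordGE (n : ℕ) (f : R2) : Prop := ∀ d, sdeg d < n → coeff (R := ℂ) d f = 0

lemma ordGE_mono {m n : ℕ} (h : m ≤ n) {f : R2} (hf : ordGE n f) : ordGE m f :=
  fun d hd => hf d (lt_of_lt_of_le hd h)

lemma ordGE_zero (n : ℕ) : ordGE n (0 : R2) := fun d _ => by simp

lemma ordGE_any (f : R2) : ordGE 0 f := fun _ h => absurd h (by omega)

lemma ordGE_add {n : ℕ} {f g : R2} (hf : ordGE n f) (hg : ordGE n g) : ordGE n (f + g) :=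
  fun d hd => by simp [map_add, hf d hd, hg d hd]

lemma ordGE_neg {n : ℕ} {f : R2} (hf : ordGE n f) : ordGE n (-f) :=
  fun d hd => by simp [hf d hd]

lemma ordGE_mul {m n : ℕ} {f g : R2} (hf : ordGE m f) (hg : ordGE n g) :
    ordGE (m + n) (f * g) := by
  intro d hd
  rw [coeff_mul]
  refine Finset.sum_eq_zero fun p hp => ?_
  rw [Finset.HasAntidiagonal.mem_antidiagonal] at hp
  have : sdeg p.1 + sdeg p.2 = sdeg d := by rw [← sdeg_add, hp]
  rcases lt_or_ge (sdeg p.1) m with h | h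
  · rw [hf _ h, zero_mul]
  · rw [hg _ (by omega), mul_zero]

lemma ordGE_pow {m : ℕ} {f : R2} (hf : ordGE m f) (k : ℕ) : ordGE (k * m) (f ^ k) := by
  induction k with
  | zero => simpa using ordGE_any 1
  | succ k ih =>
      rw [pow_succ, Nat.succ_mul]
      exact ordGE_mul ih hf

lemma ordGE_one_iff {f : R2} : ordGE 1 f ↔ (constantCoeff : R2 →+* ℂ) f = 0 := by
  constructor
  · intro h
    simpa [← coeff_zero_eq_constantCoeff] using h 0 (by simp [sdeg])
  · intro h d hd
    have : d = 0 := by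
      ext i; fin_cases i <;> simp <;> simp [sdeg] at hd <;> omega
    subst this
    simpa [coeff_zero_eq_constantCoeff] using h

lemma ordGE_X (i : Fin 2) : ordGE 1 (X i : R2) :=
  ordGE_one_iff.mpr (constantCoeff_X i)

def Pe (p q : R2) (e : Fin 2 →₀ ℕ) : R2 := p ^ (e 0) * q ^ (e 1)

lemma ordGE_Pe {p q : R2} (hp : (constantCoeff : R2 →+* ℂ) p = 0)
    (hq : (constantCoeff : R2 →+* ℂ) q = 0) (e : Fin 2 →₀ ℕ) : ordGE (sdeg e) (Pe p q e) := by
  have h1 : ordGE (e 0) (p ^ (e 0)) := by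
    simpa using ordGE_pow (ordGE_one_iff.mpr hp) (e 0)
  have h2 : ordGE (e 1) (q ^ (e 1)) := by
    simpa using ordGE_pow (ordGE_one_iff.mpr hq) (e 1)
  exact ordGE_mul h1 h2

lemma Pe_add (p q : R2) (u v : Fin 2 →₀ ℕ) : Pe p q (u + v) = Pe p q u * Pe p q v := by
  simp only [Pe, Finsupp.add_apply, pow_add]; ring

def IicS (N : ℕ) : Finset (Fin 2 →₀ ℕ) := Finset.Iic (fe N N)

lemma mem_IicS {e : Fin 2 →₀ ℕ} {N : ℕ} : e ∈ IicS N ↔ e 0 ≤ N ∧ e 1 ≤ N := by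
  rw [IicS, Finset.mem_Iic, le_fe_iff]

lemma sdeg_le_of_mem_IicS {e : Fin 2 →₀ ℕ} {N : ℕ} (h : e ∈ IicS N) : sdeg e ≤ 2 * N := by
  rw [mem_IicS] at h; simp only [sdeg]; omega

def substFun (p q f : R2) : R2 := fun d => ∑ e ∈ IicS (sdeg d), coeff (R := ℂ) e f * coeff (R := ℂ) d (Pe p q e)

lemma coeff_substFun (p q f : R2) (d : Fin 2 →₀ ℕ) :
    coeff (R := ℂ) d (substFun p q f) = ∑ e ∈ IicS (sdeg d), coeff (R := ℂ) e f * coeff (R := ℂ) d (Pe p q e) := rfl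

lemma coeff_substFun_eq {p q : R2} (hp : (constantCoeff : R2 →+* ℂ) p = 0)
    (hq : (constantCoeff : R2 →+* ℂ) q = 0) (f : R2) (d : Fin 2 →₀ ℕ) {M : ℕ} (hM : sdeg d ≤ M) :
    coeff (R := ℂ) d (substFun p q f) = ∑ e ∈ IicS M, coeff (R := ℂ) e f * coeff (R := ℂ) d (Pe p q e) := by
  rw [coeff_substFun]
  refine Finset.sum_subset (fun e he => ?_) (fun e heM hed => ?_)
  · rw [mem_IicS] at he ⊢; omega
  · have : sdeg d < sdeg e := by
      rw [mem_IicS] at heM hed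
      simp only [sdeg] at heM hed ⊢; omega
    rw [ordGE_Pe hp hq e d this, mul_zero]

lemma substFun_mul {p q : R2} (hp : (constantCoeff : R2 →+* ℂ) p = 0)
    (hq : (constantCoeff : R2 →+* ℂ) q = 0) (f g : R2) :
    substFun p q (f * g) = substFun p q f * substFun p q g := by
  apply MvPowerSeries.ext; intro d
  set N := sdeg d with hN
  -- RHS
  rw [coeff_mul]
  have hrw : ∀ y ∈ Finset.HasAntidiagonal.antidiagonal d,
      coeff (R := ℂ) y.1 (substFun p q f) * coeff (R := ℂ) y.2 (substFun p q g)
      = ∑ u ∈ IicS N, ∑ v ∈ IicS N,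
          coeff (R := ℂ) u f * coeff (R := ℂ) v g * (coeff (R := ℂ) y.1 (Pe p q u) * coeff (R := ℂ) y.2 (Pe p q v)) := by
    intro y hy
    rw [Finset.HasAntidiagonal.mem_antidiagonal] at hy
    have h1 : sdeg y.1 ≤ N := by
      have : sdeg y.1 + sdeg y.2 = N := by
        simp only [hN, sdeg, ← hy, Finsupp.add_apply]; ring
      omega
    have h2 : sdeg y.2 ≤ N := by
      have : sdeg y.1 + sdeg y.2 = N := by
        simp only [hN, sdeg, ← hy, Finsupp.add_apply]; ring
      omega
    rw [coeff_substFun_eq hp hq f y.1 h1, coeff_substFun_eq hp hq g y.2 h2,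
      Finset.sum_mul_sum]
    apply Finset.sum_congr rfl; intro u _; apply Finset.sum_congr rfl; intro v _; ring
  rw [Finset.sum_congr rfl hrw, Finset.sum_comm]
  have : ∀ u ∈ IicS N,
      (∑ y ∈ Finset.HasAntidiagonal.antidiagonal d, ∑ v ∈ IicS N,
        coeff (R := ℂ) u f * coeff (R := ℂ) v g * (coeff (R := ℂ) y.1 (Pe p q u) * coeff (R := ℂ) y.2 (Pe p q v)))
      = ∑ v ∈ IicS N, coeff (R := ℂ) u f * coeff (R := ℂ) v g * coeff (R := ℂ) d (Pe p q u * Pe p q v) := by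
    intro u _
    rw [Finset.sum_comm]
    apply Finset.sum_congr rfl; intro v _
    rw [coeff_mul, Finset.mul_sum]
  rw [Finset.sum_congr rfl this]
  -- LHS
  have hlhs : coeff (R := ℂ) d (substFun p q (f * g))
      = ∑ e ∈ IicS N, ∑ x ∈ Finset.HasAntidiagonal.antidiagonal e,
          coeff (R := ℂ) x.1 f * coeff (R := ℂ) x.2 g * coeff (R := ℂ) d (Pe p q x.1 * Pe p q x.2) := by
    rw [coeff_substFun_eq hp hq _ d (le_refl N)]
    apply Finset.sum_congr rfl; intro e _
    rw [coeff_mul, Finset.sum_mul]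
    apply Finset.sum_congr rfl; intro x hx
    rw [Finset.HasAntidiagonal.mem_antidiagonal] at hx
    rw [← Pe_add, hx]
  rw [hlhs]
  -- now: ∑_{e ∈ IicS N} ∑_{x ∈ antid e} F x = ∑_{u} ∑_{v} F (u,v)
  rw [Finset.sum_sigma']
  rw [← Finset.sum_product']
  set F : (Fin 2 →₀ ℕ) × (Fin 2 →₀ ℕ) → ℂ := fun x =>
    coeff (R := ℂ) x.1 f * coeff (R := ℂ) x.2 g * coeff (R := ℂ) d (Pe p q x.1 * Pe p q x.2) with hF
  have hsplit :
      ∑ x ∈ (IicS N ×ˢ IicS N), F x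
      = ∑ x ∈ (IicS N ×ˢ IicS N).filter (fun x => x.1 + x.2 ∈ IicS N), F x := by
    rw [Finset.sum_filter_of_ne]
    intro x hx hFx
    by_contra hmem
    apply hFx
    have : sdeg d < sdeg (x.1 + x.2) := by
      rw [mem_IicS] at hmem
      simp only [sdeg, Finsupp.add_apply] at *
      omega
    have := ordGE_Pe hp hq (x.1 + x.2) d this
    rw [Pe_add] at this
    simp [hF, this]
  rw [hsplit]
  apply Finset.sum_nbij' (fun y => y.2) (fun x => ⟨x.1 + x.2, x⟩)
  · intro y hy
    rw [Finset.mem_sigma] at hy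
    obtain ⟨h1, h2⟩ := hy
    rw [Finset.HasAntidiagonal.mem_antidiagonal] at h2
    rw [Finset.mem_filter, Finset.mem_product]
    refine ⟨⟨?_, ?_⟩, by rwa [h2]⟩
    · rw [mem_IicS] at h1 ⊢
      have e0 : y.2.1 0 ≤ y.1 0 := by rw [← h2]; simp
      have e1 : y.2.1 1 ≤ y.1 1 := by rw [← h2]; simp
      omega
    · rw [mem_IicS] at h1 ⊢
      have e0 : y.2.2 0 ≤ y.1 0 := by rw [← h2]; simp
      have e1 : y.2.2 1 ≤ y.1 1 := by rw [← h2]; simp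
      omega
  · intro x hx
    rw [Finset.mem_filter] at hx
    rw [Finset.mem_sigma]
    exact ⟨hx.2, by rw [Finset.HasAntidiagonal.mem_antidiagonal]⟩
  · intro y hy
    rw [Finset.mem_sigma] at hy
    obtain ⟨_, h2⟩ := hy
    rw [Finset.HasAntidiagonal.mem_antidiagonal] at h2
    exact Sigma.ext h2 (by simp)
  · intro x _; rfl
  · intro y _; rfl

lemma substFun_add (f g : R2) :
    substFun p q (f + g) = substFun p q f + substFun p q g := by
  apply MvPowerSeries.ext; intro d
  rw [map_add, coeff_substFun, coeff_substFun, coeff_substFun, ← Finset.sum_add_distrib]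
  apply Finset.sum_congr rfl; intro e _
  rw [map_add]; ring

lemma substFun_C (c : ℂ) : substFun p q ((C : ℂ →+* R2) c) = (C : ℂ →+* R2) c := by
  apply MvPowerSeries.ext; intro d
  rw [coeff_substFun]
  have h0 : (0 : Fin 2 →₀ ℕ) ∈ IicS (sdeg d) := by rw [mem_IicS]; simp
  rw [Finset.sum_eq_single (0 : Fin 2 →₀ ℕ)]
  · have h1 : Pe p q 0 = 1 := by simp [Pe]
    rw [h1, coeff_C, coeff_one, coeff_C]
    by_cases hd : d = 0 <;> simp [hd]
  · intro e _ he
    rw [coeff_C, if_neg he, zero_mul]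
  · intro h; exact absurd h0 h

lemma substFun_one : substFun p q 1 = 1 := by
  have := substFun_C (p := p) (q := q) 1
  simpa using this

lemma substFun_X0 (hp : (constantCoeff : R2 →+* ℂ) p = 0)
    (hq : (constantCoeff : R2 →+* ℂ) q = 0) : substFun p q (X 0) = p := by
  apply MvPowerSeries.ext; intro d
  rw [coeff_substFun_eq hp hq _ d (show sdeg d ≤ sdeg d + 1 by omega)]
  have hmem : (single (0 : Fin 2) 1) ∈ IicS (sdeg d + 1) := by
    rw [mem_IicS]; simp
  rw [Finset.sum_eq_single (single (0:Fin 2) 1)]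
  · have h1 : Pe p q (single (0:Fin 2) 1) = p := by
      simp [Pe, Finsupp.single_apply]
    rw [h1, coeff_X, if_pos rfl, one_mul]
  · intro e _ he
    rw [coeff_X, if_neg he, zero_mul]
  · intro h; exact absurd hmem h

lemma substFun_X1 (hp : (constantCoeff : R2 →+* ℂ) p = 0)
    (hq : (constantCoeff : R2 →+* ℂ) q = 0) : substFun p q (X 1) = q := by
  apply MvPowerSeries.ext; intro d
  rw [coeff_substFun_eq hp hq _ d (show sdeg d ≤ sdeg d + 1 by omega)]
  have hmem : (single (1 : Fin 2) 1) ∈ IicS (sdeg d + 1) := by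
    rw [mem_IicS]; simp [Finsupp.single_apply]
  rw [Finset.sum_eq_single (single (1:Fin 2) 1)]
  · have h1 : Pe p q (single (1:Fin 2) 1) = q := by
      simp [Pe, Finsupp.single_apply]
    rw [h1, coeff_X, if_pos rfl, one_mul]
  · intro e _ he
    rw [coeff_X, if_neg he, zero_mul]
  · intro h; exact absurd hmem h

def substR (hp : (constantCoeff : R2 →+* ℂ) p = 0)
    (hq : (constantCoeff : R2 →+* ℂ) q = 0) : R2 →+* R2 where
  toFun := substFun p q
  map_one' := substFun_one
  map_mul' := substFun_mul hp hq
  map_zero' := by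
    have := substFun_C (p := p) (q := q) 0
    simpa using this
  map_add' := substFun_add

lemma ordGE_sum {n : ℕ} {s : Finset ℕ} {F : ℕ → R2} (h : ∀ i ∈ s, ordGE n (F i)) :
    ordGE n (∑ i ∈ s, F i) := by
  intro d hd
  rw [map_sum]
  exact Finset.sum_eq_zero fun i hi => h i hi d hd

lemma ordGE_pow_sub_pow {f g : R2} (hf1 : ordGE 1 f) (hg1 : ordGE 1 g)
    (h : ordGE 2 (f - g)) (a : ℕ) : ordGE (a + 1) (f ^ a - g ^ a) := by
  rcases Nat.eq_zero_or_pos a with ha | ha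
  · subst ha; simpa using ordGE_zero 1
  rw [← geom_sum₂_mul]
  have hsum : ordGE (a - 1) (∑ i ∈ Finset.range a, f ^ i * g ^ (a - 1 - i)) := by
    apply ordGE_sum
    intro i hi
    rw [Finset.mem_range] at hi
    have h1 : ordGE i (f ^ i) := by simpa using ordGE_pow hf1 i
    have h2 : ordGE (a - 1 - i) (g ^ (a - 1 - i)) := by simpa using ordGE_pow hg1 _
    exact ordGE_mono (by omega) (ordGE_mul h1 h2)
  have := ordGE_mul hsum h
  exact ordGE_mono (by omega) this

lemma X_prod_eq (a b : ℕ) :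
    (X 0 : R2) ^ a * X 1 ^ b = monomial (R := ℂ) (fe a b) 1 := by
  rw [X_pow_eq, X_pow_eq, monomial_mul_monomial, one_mul, fe]

lemma ordGE_Pe_sub_monomial {p q : R2}
    (hp2 : ordGE 2 (p - X 0)) (hq2 : ordGE 2 (q - X 1)) (e : Fin 2 →₀ ℕ) :
    ordGE (sdeg e + 1) (Pe p q e - monomial (R := ℂ) e 1) := by
  have hp1 : ordGE 1 p := by
    have : p = (p - X 0) + X 0 := by ring
    rw [ordGE_one_iff] at *
    rw [this, map_add, constantCoeff_X, (ordGE_one_iff).mp (ordGE_mono one_le_two hp2), add_zero]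
  have hq1 : ordGE 1 q := by
    have : q = (q - X 1) + X 1 := by ring
    rw [ordGE_one_iff] at *
    rw [this, map_add, constantCoeff_X, (ordGE_one_iff).mp (ordGE_mono one_le_two hq2), add_zero]
  have key : Pe p q e - monomial (R := ℂ) e 1
      = (p ^ (e 0) - X 0 ^ (e 0)) * q ^ (e 1) + (X 0 : R2) ^ (e 0) * (q ^ (e 1) - X 1 ^ (e 1)) := by
    rw [Pe, ← fe_eq e, ← X_prod_eq]
    rw [fe_eq]
    ring
  rw [key]
  have h1 : ordGE (e 0 + 1 + e 1) ((p ^ (e 0) - X 0 ^ (e 0)) * q ^ (e 1)) := by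
    apply ordGE_mul (ordGE_pow_sub_pow hp1 (by rw [ordGE_one_iff]; exact constantCoeff_X 0) hp2 _)
    simpa using ordGE_pow hq1 (e 1)
  have h2 : ordGE (e 0 + (e 1 + 1)) ((X 0 : R2) ^ (e 0) * (q ^ (e 1) - X 1 ^ (e 1))) := by
    apply ordGE_mul
    · simpa using ordGE_pow (show ordGE 1 (X 0 : R2) by rw [ordGE_one_iff]; exact constantCoeff_X 0) (e 0)
    · exact ordGE_pow_sub_pow hq1 (by rw [ordGE_one_iff]; exact constantCoeff_X 1) hq2 _
  intro d hd
  rw [map_add, ordGE_mono (by simp only [sdeg]; omega) h1 d hd, ordGE_mono (by simp only [sdeg]; omega) h2 d hd, add_zero]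

lemma coeff_Pe_triangular {p q : R2}
    (hp2 : ordGE 2 (p - X 0)) (hq2 : ordGE 2 (q - X 1)) {e d : Fin 2 →₀ ℕ}
    (h : sdeg d ≤ sdeg e) :
    coeff (R := ℂ) d (Pe p q e) = if d = e then 1 else 0 := by
  have h1 := ordGE_Pe_sub_monomial hp2 hq2 e
  have h2 : coeff (R := ℂ) d (Pe p q e) - coeff (R := ℂ) d (monomial (R := ℂ) e 1) = 0 := by
    rw [← map_sub]; exact h1 d (by omega)
  rw [sub_eq_zero] at h2
  rw [h2, coeff_monomial]

lemma self_mem_IicS (d : Fin 2 →₀ ℕ) : d ∈ IicS (sdeg d) := by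
  rw [mem_IicS]; constructor <;> simp [sdeg] <;> omega

lemma substFun_injective {p q : R2}
    (hp2 : ordGE 2 (p - X 0)) (hq2 : ordGE 2 (q - X 1)) {f : R2}
    (h : substFun p q f = 0) : f = 0 := by
  by_contra hf
  have hex : ∃ n, ∃ d, sdeg d = n ∧ coeff (R := ℂ) d f ≠ 0 := by
    have : ∃ d, coeff (R := ℂ) d f ≠ 0 := by
      by_contra hall
      push_neg at hall
      exact hf (MvPowerSeries.ext fun d => by rw [hall d]; simp)
    obtain ⟨d, hd⟩ := this
    exact ⟨sdeg d, d, rfl, hd⟩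
  classical
  obtain ⟨d, hdN, hd0⟩ := Nat.find_spec hex
  have hmin : ∀ e, sdeg e < Nat.find hex → coeff (R := ℂ) e f = 0 := by
    intro e he
    by_contra h0
    exact Nat.find_min hex he ⟨e, rfl, h0⟩
  have : coeff (R := ℂ) d (substFun p q f) = coeff (R := ℂ) d f := by
    rw [coeff_substFun]
    rw [Finset.sum_eq_single d]
    · rw [coeff_Pe_triangular hp2 hq2 (le_refl _), if_pos rfl, mul_one]
    · intro e _ hed
      rcases lt_or_ge (sdeg e) (sdeg d) with hlt | hle
      · rw [hmin e (by omega), zero_mul]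
      · rw [coeff_Pe_triangular hp2 hq2 hle, if_neg (by exact fun hde => hed hde.symm), mul_zero]
    · intro hd; exact absurd (self_mem_IicS d) hd
  rw [h] at this
  simp only [map_zero] at this
  exact hd0 this.symm

def solveCoeff (p q h : R2) (d : Fin 2 →₀ ℕ) : ℂ :=
  coeff (R := ℂ) d h - ∑ e ∈ IicS (sdeg d),
    (if _ : sdeg e < sdeg d then solveCoeff p q h e * coeff (R := ℂ) d (Pe p q e) else 0)
termination_by sdeg d

lemma solveCoeff_eq (p q h : R2) (d : Fin 2 →₀ ℕ) : solveCoeff p q h d =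
    coeff (R := ℂ) d h - ∑ e ∈ IicS (sdeg d),
      (if sdeg e < sdeg d then solveCoeff p q h e * coeff (R := ℂ) d (Pe p q e) else 0) := by
  rw [solveCoeff]
  apply congrArg
  apply Finset.sum_congr rfl
  intro e _
  split <;> rfl

lemma substFun_surjective {p q : R2}
    (hp2 : ordGE 2 (p - X 0)) (hq2 : ordGE 2 (q - X 1)) (h : R2) :
    substFun p q (fun e => solveCoeff p q h e : MvPowerSeries (Fin 2) ℂ) = h := by
  apply MvPowerSeries.ext; intro d
  rw [coeff_substFun p q (fun e => solveCoeff p q h e : MvPowerSeries (Fin 2) ℂ)]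
  have hd : d ∈ IicS (sdeg d) := self_mem_IicS d
  have hcoeff : ∀ e, coeff (R := ℂ) e (fun e => solveCoeff p q h e : MvPowerSeries (Fin 2) ℂ)
      = solveCoeff p q h e := fun e => rfl
  rw [← Finset.add_sum_erase _ _ hd]
  have hPe : coeff (R := ℂ) d (Pe p q d) = 1 := by
    rw [coeff_Pe_triangular hp2 hq2 (le_refl _), if_pos rfl]
  rw [hcoeff, hPe, mul_one]
  have herase : ∑ e ∈ (IicS (sdeg d)).erase d,
      coeff (R := ℂ) e (fun e => solveCoeff p q h e : MvPowerSeries (Fin 2) ℂ) * coeff (R := ℂ) d (Pe p q e)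
      = ∑ e ∈ IicS (sdeg d),
        (if sdeg e < sdeg d then solveCoeff p q h e * coeff (R := ℂ) d (Pe p q e) else 0) := by
    rw [← Finset.sum_erase (s := IicS (sdeg d)) (a := d)
      (f := fun e => if sdeg e < sdeg d then solveCoeff p q h e * coeff (R := ℂ) d (Pe p q e) else 0)
      (by exact if_neg (lt_irrefl _))]
    apply Finset.sum_congr rfl
    intro e he
    rw [Finset.mem_erase] at he
    rw [hcoeff]
    rcases lt_or_ge (sdeg e) (sdeg d) with hlt | hle
    · rw [if_pos hlt]
    · rw [if_neg (by omega),
        coeff_Pe_triangular hp2 hq2 hle, if_neg (fun hde' => he.1 hde'.symm), mul_zero]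
  rw [herase, solveCoeff_eq]
  ring

def rootCoeff (u : R2) (n : ℕ) (d : Fin 2 →₀ ℕ) : ℂ :=
  if d = 0 then 1
  else
    let L : MvPowerSeries (Fin 2) ℂ := fun e => if sdeg e < sdeg d then rootCoeff u n e else 0
    (coeff (R := ℂ) d u - coeff (R := ℂ) d (L ^ n)) / n
termination_by sdeg d
decreasing_by exact ‹_›

lemma exists_root (u : R2) (hu : (constantCoeff : R2 →+* ℂ) u = 1) (n : ℕ) (hn : 0 < n) :
    ∃ v : R2, v ^ n = u ∧ (constantCoeff : R2 →+* ℂ) v = 1 := by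
  classical
  set v : R2 := fun d => rootCoeff u n d with hv
  have hv0 : (constantCoeff : R2 →+* ℂ) v = 1 := by
    rw [← coeff_zero_eq_constantCoeff]
    show rootCoeff u n 0 = 1
    rw [rootCoeff]
    simp
  refine ⟨v, ?_, hv0⟩
  apply MvPowerSeries.ext; intro d
  by_cases hd : d = 0
  · subst hd
    have e1 : coeff (R := ℂ) (0 : Fin 2 →₀ ℕ) (v ^ n) = (constantCoeff : R2 →+* ℂ) (v ^ n) :=
      coeff_zero_eq_constantCoeff_apply _
    have e2 : coeff (R := ℂ) (0 : Fin 2 →₀ ℕ) u = (constantCoeff : R2 →+* ℂ) u :=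
      coeff_zero_eq_constantCoeff_apply _
    rw [e1, e2, map_pow, hv0, one_pow, hu]
  · set L : R2 := (fun e => if sdeg e < sdeg d then rootCoeff u n e else 0) with hL
    have hL0 : (constantCoeff : R2 →+* ℂ) L = 1 := by
      rw [← coeff_zero_eq_constantCoeff]
      show (if sdeg (0 : Fin 2 →₀ ℕ) < sdeg d then rootCoeff u n 0 else 0) = 1
      rw [if_pos]
      · rw [rootCoeff]; simp
      · have h0 : sdeg (0 : Fin 2 →₀ ℕ) = 0 := by simp [sdeg]
        have : sdeg d ≠ 0 := fun h => hd (sdeg_eq_zero h)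
        omega
    have hgeom : (∑ i ∈ Finset.range n, v ^ i * L ^ (n - 1 - i)) * (v - L) = v ^ n - L ^ n :=
      geom_sum₂_mul v L n
    have hE : ∀ d2 : Fin 2 →₀ ℕ, sdeg d2 < sdeg d → coeff (R := ℂ) d2 (v - L) = 0 := by
      intro d2 h2
      rw [map_sub]
      show rootCoeff u n d2 - (if sdeg d2 < sdeg d then rootCoeff u n d2 else 0) = 0
      rw [if_pos h2, sub_self]
    have hEd : coeff (R := ℂ) d (v - L) = rootCoeff u n d := by
      rw [map_sub]
      show rootCoeff u n d - (if sdeg d < sdeg d then rootCoeff u n d else 0) = _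
      rw [if_neg (by omega), sub_zero]
    have hcoeff : coeff (R := ℂ) d ((∑ i ∈ Finset.range n, v ^ i * L ^ (n - 1 - i)) * (v - L))
        = (n : ℂ) * rootCoeff u n d := by
      rw [coeff_mul]
      rw [Finset.sum_eq_single ((0 : Fin 2 →₀ ℕ), d)]
      · rw [coeff_zero_eq_constantCoeff, hEd]
        have : (constantCoeff : R2 →+* ℂ) (∑ i ∈ Finset.range n, v ^ i * L ^ (n - 1 - i)) = n := by
          rw [map_sum]
          have : ∀ i ∈ Finset.range n,
              (constantCoeff : R2 →+* ℂ) (v ^ i * L ^ (n - 1 - i)) = 1 := by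
            intro i _
            rw [map_mul, map_pow, map_pow, hv0, hL0, one_pow, one_pow, one_mul]
          rw [Finset.sum_congr rfl this]
          simp
        rw [this]
      · rintro ⟨d1, d2⟩ hmem hne
        rw [Finset.HasAntidiagonal.mem_antidiagonal] at hmem
        rcases lt_or_ge (sdeg d2) (sdeg d) with h2 | h2
        · rw [hE d2 h2, mul_zero]
        · exfalso
          apply hne
          have hsum : sdeg d1 + sdeg d2 = sdeg d := by rw [← sdeg_add, hmem]
          have hd1 : d1 = 0 := sdeg_eq_zero (by omega)
          subst hd1
          rw [zero_add] at hmem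
          rw [Prod.mk.injEq]
          exact ⟨rfl, hmem⟩
      · intro habs
        exact absurd (by rw [Finset.HasAntidiagonal.mem_antidiagonal]; simp) habs
    rw [hgeom] at hcoeff
    rw [map_sub] at hcoeff
    have hroot : rootCoeff u n d = (coeff (R := ℂ) d u - coeff (R := ℂ) d (L ^ n)) / n := by
      rw [rootCoeff, if_neg hd, ← hL]
    have hn' : (n : ℂ) ≠ 0 := Nat.cast_ne_zero.mpr (by omega)
    rw [hroot] at hcoeff
    field_simp at hcoeff
    exact sub_left_inj.mp hcoeff


lemma substR_apply {p q : R2} (hp : (constantCoeff : R2 →+* ℂ) p = 0)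
    (hq : (constantCoeff : R2 →+* ℂ) q = 0) (f : R2) : substR hp hq f = substFun p q f := rfl

lemma constantCoeff_of_ordGE2 {p : R2} {i : Fin 2} (h : ordGE 2 (p - X i)) :
    (constantCoeff : R2 →+* ℂ) p = 0 := by
  have h1 : (constantCoeff : R2 →+* ℂ) (p - X i) = 0 :=
    ordGE_one_iff.mp (ordGE_mono one_le_two h)
  have : p = (p - X i) + X i := by ring
  rw [this, map_add, h1, constantCoeff_X, add_zero]

/-- the substitution automorphism attached to a unipotent coordinate change -/
def substEquiv {p q : R2} (hp2 : ordGE 2 (p - X 0)) (hq2 : ordGE 2 (q - X 1)) :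
    R2 ≃+* R2 :=
  RingEquiv.ofBijective (substR (constantCoeff_of_ordGE2 hp2) (constantCoeff_of_ordGE2 hq2))
    ⟨by
      rw [injective_iff_map_eq_zero]
      intro f hf
      rw [substR_apply] at hf
      exact substFun_injective hp2 hq2 hf,
     fun h => ⟨(fun e => solveCoeff p q h e : MvPowerSeries (Fin 2) ℂ), by
      rw [substR_apply _ _ (fun e => solveCoeff p q h e : MvPowerSeries (Fin 2) ℂ)]
      exact substFun_surjective hp2 hq2 h⟩⟩

lemma substEquiv_apply {p q : R2} (hp2 : ordGE 2 (p - X 0)) (hq2 : ordGE 2 (q - X 1)) (f : R2) :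
    substEquiv hp2 hq2 f = substFun p q f :=
  substR_apply (constantCoeff_of_ordGE2 hp2) (constantCoeff_of_ordGE2 hq2) f

/-- the unit `A` with `x²A + 9xy³² - y³⁶ = x² + (x-y⁴)⁹` -/
def AA : R2 := 1 - 36 * X 1 ^ 28 + 84 * X 0 * X 1 ^ 24 - 126 * X 0 ^ 2 * X 1 ^ 20
    + 126 * X 0 ^ 3 * X 1 ^ 16 - 84 * X 0 ^ 4 * X 1 ^ 12 + 36 * X 0 ^ 5 * X 1 ^ 8
    - 9 * X 0 ^ 6 * X 1 ^ 4 + X 0 ^ 7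

lemma constantCoeff_AA : (constantCoeff : R2 →+* ℂ) AA = 1 := by
  simp [AA, map_ofNat, constantCoeff_X]

/-- The plane projective curve `f(z₁,z₂,z₃) = z₃(z₁z₃³ + z₂⁴)² + z₁⁹ = 0` has at the point
`z₁ = z₂ = 0` of the affine chart `z₃ = 1` the local equation
`g(z₁,z₂) = (z₁ + z₂⁴)² + z₁⁹`, and `g` is, after an analytic change of coordinates (an
automorphism of `ℂ⟦z₁,z₂⟧`), equivalent to the equation `w² − z³⁶ = 0` (the two equations
generate the same ideal). -/
theorem cone_example_singularity_A35 :
    (∀ z₁ z₂ : ℂ, (1 : ℂ) * (z₁ * 1 ^ 3 + z₂ ^ 4) ^ 2 + z₁ ^ 9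
        = (z₁ + z₂ ^ 4) ^ 2 + z₁ ^ 9) ∧
    ∃ φ : MvPowerSeries (Fin 2) ℂ ≃+* MvPowerSeries (Fin 2) ℂ,
      Ideal.span {φ ((X 0 + X 1 ^ 4) ^ 2 + X 0 ^ 9)} =
        Ideal.span {(X 0 : MvPowerSeries (Fin 2) ℂ) ^ 2 - X 1 ^ 36} := by
  constructor
  · intro z₁ z₂; ring
  -- roots and inverses
  obtain ⟨B, hB2, hB0⟩ := exists_root AA constantCoeff_AA 2 (by norm_num)
  have hAne : AA ≠ 0 := by
    intro h
    have h1 := constantCoeff_AA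
    rw [h, map_zero] at h1
    exact one_ne_zero h1.symm
  have hBne : (constantCoeff : R2 →+* ℂ) B ≠ 0 := by rw [hB0]; exact one_ne_zero
  have hBi : B * B⁻¹ = 1 := MvPowerSeries.mul_inv_cancel _ hBne
  have hAi : AA * AA⁻¹ = 1 := MvPowerSeries.mul_inv_cancel _ (by
    rw [constantCoeff_AA]; exact one_ne_zero)
  set Bi := B⁻¹ with hBidef
  set Ai := AA⁻¹ with hAidef
  have hBi2 : Bi ^ 2 = Ai := by
    have h1 : AA * Bi ^ 2 = AA * Ai := by
      have e1 : AA * Bi ^ 2 = (B * Bi) ^ 2 := by rw [← hB2]; ring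
      rw [e1, hBi, one_pow, hAi]
    exact mul_left_cancel₀ hAne h1
  set U : R2 := 1 + (C : ℂ →+* R2) (81/4) * X 1 ^ 28 * Ai with hUdef
  have hU0 : (constantCoeff : R2 →+* ℂ) U = 1 := by
    rw [hUdef]
    simp [constantCoeff_X]
  obtain ⟨W, hW36, hW0⟩ := exists_root U hU0 36 (by norm_num)
  -- coordinates
  set Pp : R2 := X 0 * B + (C : ℂ →+* R2) (9/2) * X 1 ^ 32 * Bi with hPpdef
  set Qq : R2 := X 1 * W with hQqdef
  have hp2θ : ordGE 2 (Pp - X 0) := by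
    have e : Pp - X 0 = X 0 * (B - 1) + (C : ℂ →+* R2) (9/2) * X 1 ^ 32 * Bi := by
      rw [hPpdef]; ring
    rw [e]
    apply ordGE_add
    · refine ordGE_mul (m := 1) (n := 1) (ordGE_X 0) ?_
      rw [ordGE_one_iff, map_sub, hB0, map_one, sub_self]
    · apply ordGE_mono (show (2:ℕ) ≤ 0 + 32 + 0 by omega)
      apply ordGE_mul
      apply ordGE_mul (ordGE_any _)
      · simpa using ordGE_pow (ordGE_X 1) 32
      · exact ordGE_any _
  have hq2θ : ordGE 2 (Qq - X 1) := by
    have e : Qq - X 1 = X 1 * (W - 1) := by rw [hQqdef]; ring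
    rw [e]
    refine ordGE_mul (m := 1) (n := 1) (ordGE_X 1) ?_
    rw [ordGE_one_iff, map_sub, hW0, map_one, sub_self]
  -- first coordinate change
  have hp2₁ : ordGE 2 ((X 0 - X 1 ^ 4 : R2) - X 0) := by
    have e : (X 0 - X 1 ^ 4 : R2) - X 0 = -(X 1 ^ 4) := by ring
    rw [e]
    apply ordGE_neg
    apply ordGE_mono (show (2:ℕ) ≤ 4 by omega)
    simpa using ordGE_pow (ordGE_X 1) 4
  have hq2₁ : ordGE 2 ((X 1 : R2) - X 1) := by
    simpa using ordGE_zero 2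
  set E1 := substEquiv hp2₁ hq2₁ with hE1def
  set θ := substEquiv hp2θ hq2θ with hθdef
  -- computations
  have hcc0 := constantCoeff_of_ordGE2 hp2₁
  have hcc1 := constantCoeff_of_ordGE2 hq2₁
  have hccP := constantCoeff_of_ordGE2 hp2θ
  have hccQ := constantCoeff_of_ordGE2 hq2θ
  have hE1g : E1 ((X 0 + X 1 ^ 4) ^ 2 + X 0 ^ 9) = X 0 ^ 2 + (X 0 - X 1 ^ 4) ^ 9 := by
    rw [hE1def, map_add, map_pow, map_pow, map_add, map_pow,
      substEquiv_apply, substEquiv_apply,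
      substFun_X0 hcc0 hcc1, substFun_X1 hcc0 hcc1]
    ring
  have hθt : θ ((X 0 : R2) ^ 2 - X 1 ^ 36) = X 0 ^ 2 + (X 0 - X 1 ^ 4) ^ 9 := by
    rw [hθdef, map_sub, map_pow, map_pow,
      substEquiv_apply, substEquiv_apply,
      substFun_X0 hccP hccQ, substFun_X1 hccP hccQ]
    -- algebra
    have hcc : (C : ℂ →+* R2) (9/2) * (C : ℂ →+* R2) (9/2) = (C : ℂ →+* R2) (81/4) := by
      rw [← map_mul, show (9/2 * (9/2) : ℂ) = 81/4 by norm_num]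
    have h9 : (C : ℂ →+* R2) (9/2) + (C : ℂ →+* R2) (9/2) = (9 : R2) := by
      rw [← map_add, show (9/2 + 9/2 : ℂ) = 9 by norm_num]
      exact map_ofNat ((C : ℂ →+* R2)) 9
    have hAAdef : AA = 1 - 36 * X 1 ^ 28 + 84 * X 0 * X 1 ^ 24 - 126 * X 0 ^ 2 * X 1 ^ 20
        + 126 * X 0 ^ 3 * X 1 ^ 16 - 84 * X 0 ^ 4 * X 1 ^ 12 + 36 * X 0 ^ 5 * X 1 ^ 8
        - 9 * X 0 ^ 6 * X 1 ^ 4 + X 0 ^ 7 := rfl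
    rw [hPpdef, hQqdef]
    rw [hUdef] at hW36
    linear_combination (X 0 ^ 2 : R2) * hB2 + (2 * (C : ℂ →+* R2) (9/2) * X 0 * X 1 ^ 32) * hBi
      + ((C : ℂ →+* R2) (9/2) ^ 2 * X 1 ^ 64) * hBi2 - (X 1 ^ 36) * hW36
      + (X 1 ^ 64 * Ai) * hcc + (X 0 * X 1 ^ 32) * h9 + (X 0 ^ 2) * hAAdef
  refine ⟨E1.trans θ.symm, ?_⟩
  have : (E1.trans θ.symm) ((X 0 + X 1 ^ 4) ^ 2 + X 0 ^ 9) = (X 0 : R2) ^ 2 - X 1 ^ 36 := by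
    rw [RingEquiv.trans_apply, hE1g, ← hθt, RingEquiv.symm_apply_apply]
  rw [this]

end
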